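/- Combining the two preceding identities: for the recursive dirty-derivative scheme, the estimation error of the i-th derivative satisfies Ŵ_i − s^i W = −(∏_{j=i}^{k} F_j(s)) · s^{k+1} W in ℝ(s), where F_j(s) = ((s+σ)^j − σ^j)/(s(s+σ)^j). -/
import Mathlib


open RatFunc

/-- Combined error identity for the recursive dirty-derivative estimator:
`Ŵ_i − s^i W = −(∏_{j=i}^{k} F_j(s)) · s^{k+1} W` in ℝ(s). -/
theorem dirty_derivative_error_product (σ : ℝ) (hσ : σ ≠ 0) (k : ℕ) (hk : 1 ≤ k)
    (W : RatFunc ℝ) (F : ℕ → RatFunc ℝ)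
    (hF : ∀ j, F j = ((RatFunc.X + RatFunc.C σ) ^ j - RatFunc.C σ ^ j) /
        (RatFunc.X * (RatFunc.X + RatFunc.C σ) ^ j))
    (What : ℕ → RatFunc ℝ)
    (hWk : What k = (RatFunc.C σ ^ k * RatFunc.X ^ k) / (RatFunc.X + RatFunc.C σ) ^ k * W)
    (hWrec : ∀ i, 1 ≤ i → i < k →
      What i = (RatFunc.C σ ^ i * RatFunc.X ^ i) / (RatFunc.X + RatFunc.C σ) ^ i * W
        + F i * What (i + 1))
    (i : ℕ) (hi : 1 ≤ i) (hik : i ≤ k) :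
    What i - RatFunc.X ^ i * W =
      -(∏ j ∈ Finset.Icc i k, F j) * RatFunc.X ^ (k + 1) * W := by
  have hX : (RatFunc.X : RatFunc ℝ) ≠ 0 := RatFunc.X_ne_zero
  have hXσ : (RatFunc.X + RatFunc.C σ : RatFunc ℝ) ≠ 0 := by
    have h1 : (Polynomial.X + Polynomial.C σ : Polynomial ℝ) ≠ 0 :=
      Polynomial.X_add_C_ne_zero σ
    have := RatFunc.algebraMap_ne_zero h1
    simpa using this
  obtain ⟨d, hd⟩ : ∃ d, k = i + d := ⟨k - i, by omega⟩
  induction d generalizing i with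
  | zero =>
    have hik' : i = k := by omega
    subst hik'
    rw [hWk, Finset.Icc_self, Finset.prod_singleton, hF i]
    field_simp
    ring
  | succ n ih =>
    have hlt : i < k := by omega
    rw [hWrec i hi hlt]
    have hih := ih (i + 1) (by omega) (by omega) (by omega)
    have hW1 : What (i + 1) = RatFunc.X ^ (i + 1) * W
        - (∏ j ∈ Finset.Icc (i + 1) k, F j) * RatFunc.X ^ (k + 1) * W := by
      have := hih
      linear_combination this
    rw [hW1]
    have hprod : (∏ j ∈ Finset.Icc i k, F j)
        = F i * ∏ j ∈ Finset.Icc (i + 1) k, F j := by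
      rw [← Finset.Ico_add_one_right_eq_Icc, ← Finset.Ico_add_one_right_eq_Icc,
        Finset.prod_eq_prod_Ico_succ_bot (by omega)]
    rw [hprod, hF i]
    field_simp
    ring
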